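/- Let Γ be a group acting continuously on a compact Hausdorff space K, η ∈ Prob(K) not Γ-invariant, and X = ∂_η Γ the associated boundary piece. If there is no Γ-invariant probability measure on K, then there is no left-Γ-invariant state on the C*-algebra C(X)^{Γ_r} of right-Γ-invariant continuous functions on X. -/

import Mathlib

open Filter MeasureTheory Topology

/-- The set of `η`-proximal points in the Stone–Čech compactification of the
discrete group `Γ` acting (via `act`) on the compact space `K`. -/
def proximalSet {Γ : Type*} [Group Γ] [TopologicalSpace Γ] {K : Type*}
    [TopologicalSpace K] [MeasurableSpace K]
    (act : Γ → K → K) (η : MeasureTheory.Measure K) : Set (StoneCech Γ) :=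
  {ω | ∀ h : Γ, ∀ f : C(K, ℝ),
    Tendsto
      (fun g : Γ =>
        (∫ x, f x ∂(Measure.map (act (g * h)) η)) - ∫ x, f x ∂(Measure.map (act g) η))
      (Filter.comap stoneCechUnit (nhds ω)) (nhds 0)}

/-- Left translation on the Stone–Čech compactification. -/
noncomputable def leftTrans {Γ : Type*} [Group Γ] [TopologicalSpace Γ] [DiscreteTopology Γ]
    (s : Γ) : StoneCech Γ → StoneCech Γ :=
  stoneCechExtend (continuous_of_discreteTopology (f := fun g => stoneCechUnit (s * g)))

/-- Right translation on the Stone–Čech compactification. -/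
noncomputable def rightTrans {Γ : Type*} [Group Γ] [TopologicalSpace Γ] [DiscreteTopology Γ]
    (s : Γ) : StoneCech Γ → StoneCech Γ :=
  stoneCechExtend (continuous_of_discreteTopology (f := fun g => stoneCechUnit (g * s)))

/-- The right-`Γ`-invariant continuous functions on the proximal piece `X = ∂_η Γ`. -/
def rightInvariantFuns {Γ : Type*} [Group Γ] [TopologicalSpace Γ] [DiscreteTopology Γ]
    {K : Type*} [TopologicalSpace K] [MeasurableSpace K]
    (act : Γ → K → K) (η : MeasureTheory.Measure K) :
    Set C(↥(proximalSet act η), ℝ) :=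
  {f | ∀ (g : Γ) (ω : StoneCech Γ) (hω : ω ∈ proximalSet act η)
      (hω' : rightTrans g ω ∈ proximalSet act η),
    f ⟨rightTrans g ω, hω'⟩ = f ⟨ω, hω⟩}

/-! ### Auxiliary material -/

open scoped NNReal ENNReal
open Set BoundedContinuousFunction
set_option linter.unusedSectionVars false

section ThetaAux

variable {Γ : Type*} [Group Γ] [TopologicalSpace Γ] [DiscreteTopology Γ]
  {K : Type*} [TopologicalSpace K] [CompactSpace K] [T2Space K]
  [MeasurableSpace K] [BorelSpace K]

variable (act : Γ → K → K) (η : Measure K)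

/-- The integral of `f` against `g ⋅ η`. -/
noncomputable def intAct (f : C(K, ℝ)) (g : Γ) : ℝ :=
  ∫ x, f x ∂(Measure.map (act g) η)

variable [IsProbabilityMeasure η]

lemma abs_intAct_le (f : C(K, ℝ)) (g : Γ) : |intAct act η f g| ≤ ‖f‖ := by
  by_cases h : AEMeasurable (act g) η
  · haveI := Measure.isProbabilityMeasure_map (μ := η) h
    have hb : ∀ᵐ x ∂(Measure.map (act g) η), ‖f x‖ ≤ ‖f‖ :=
      Filter.Eventually.of_forall fun x => f.norm_coe_le_norm x
    have := norm_integral_le_of_norm_le_const hb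
    simpa [intAct, Real.norm_eq_abs, measure_univ] using this
  · simp [intAct, Measure.map_of_not_aemeasurable h, norm_nonneg f]

/-- The canonical extension of `g ↦ ∫ f d(g⋅η)` to the Stone–Čech compactification. -/
noncomputable def theta (f : C(K, ℝ)) : StoneCech Γ → ℝ := fun ω =>
  ((stoneCechExtend (β := Set.Icc (-‖f‖) ‖f‖)
    (continuous_of_discreteTopology
      (f := fun g => ⟨intAct act η f g, abs_le.mp (abs_intAct_le act η f g)⟩))) ω : ℝ)

lemma theta_continuous (f : C(K, ℝ)) : Continuous (theta act η f) :=
  continuous_subtype_val.comp (continuous_stoneCechExtend _)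

lemma theta_unit (f : C(K, ℝ)) (g : Γ) :
    theta act η f (stoneCechUnit g) = intAct act η f g :=
  congrArg Subtype.val
    (congrFun (stoneCechExtend_extends (continuous_of_discreteTopology
      (f := fun g => (⟨intAct act η f g, abs_le.mp (abs_intAct_le act η f g)⟩ :
        Set.Icc (-‖f‖) ‖f‖)))) g)

lemma stoneCech_ext {F G : StoneCech Γ → ℝ} (hF : Continuous F) (hG : Continuous G)
    (h : ∀ g : Γ, F (stoneCechUnit g) = G (stoneCechUnit g)) : F = G :=
  hF.ext_on denseRange_stoneCechUnit hG (by rintro _ ⟨g, rfl⟩; exact h g)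

lemma integrable_cm (f : C(K, ℝ)) (μ : Measure K) [IsFiniteMeasure μ] :
    Integrable f μ :=
  f.continuous.integrable_of_hasCompactSupport (HasCompactSupport.of_compactSpace _)

variable (hact : ∀ g, Continuous (act g))
include hact

lemma intAct_add (f f' : C(K, ℝ)) (g : Γ) :
    intAct act η (f + f') g = intAct act η f g + intAct act η f' g := by
  haveI := Measure.isProbabilityMeasure_map (μ := η) (hact g).measurable.aemeasurable
  simpa [intAct] using integral_add (integrable_cm f _) (integrable_cm f' _)

omit hact in
lemma intAct_smul (r : ℝ) (f : C(K, ℝ)) (g : Γ) :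
    intAct act η (r • f) g = r * intAct act η f g := by
  simp only [intAct, ContinuousMap.coe_smul, Pi.smul_apply, smul_eq_mul]
  exact MeasureTheory.integral_const_mul r _

lemma intAct_one (g : Γ) : intAct act η 1 g = 1 := by
  haveI := Measure.isProbabilityMeasure_map (μ := η) (hact g).measurable.aemeasurable
  simp [intAct]

lemma theta_add (f f' : C(K, ℝ)) :
    theta act η (f + f') = fun ω => theta act η f ω + theta act η f' ω := by
  refine stoneCech_ext (theta_continuous act η _)
    ((theta_continuous act η f).add (theta_continuous act η f')) fun g => ?_
  simp only [theta_unit]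
  exact intAct_add act η hact f f' g

omit hact in
lemma theta_smul (r : ℝ) (f : C(K, ℝ)) :
    theta act η (r • f) = fun ω => r * theta act η f ω := by
  refine stoneCech_ext (theta_continuous act η _)
    (continuous_const.mul (theta_continuous act η f)) fun g => ?_
  simp only [theta_unit]
  exact intAct_smul act η r f g

lemma theta_one : theta act η (1 : C(K, ℝ)) = fun _ => 1 := by
  refine stoneCech_ext (theta_continuous act η _) continuous_const fun g => ?_
  rw [theta_unit]
  exact intAct_one act η hact g

omit hact in
lemma theta_nonneg (f : C(K, ℝ)) (hf : ∀ x, 0 ≤ f x) (ω : StoneCech Γ) :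
    0 ≤ theta act η f ω := by
  have hcl : IsClosed {ω : StoneCech Γ | 0 ≤ theta act η f ω} :=
    isClosed_le continuous_const (theta_continuous act η f)
  have hsub : Set.range (stoneCechUnit : Γ → StoneCech Γ) ⊆
      {ω : StoneCech Γ | 0 ≤ theta act η f ω} := by
    rintro _ ⟨g, rfl⟩
    rw [Set.mem_setOf_eq, theta_unit]
    exact integral_nonneg fun x => hf x
  have h2 : closure (Set.range (stoneCechUnit : Γ → StoneCech Γ)) ⊆
      {ω : StoneCech Γ | 0 ≤ theta act η f ω} := hcl.closure_subset_iff.mpr hsub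
  have h3 := denseRange_stoneCechUnit (α := Γ)
  exact h2 (by rw [h3.closure_range]; trivial)

lemma intAct_comp_act (s g : Γ) (f : C(K, ℝ))
    (hmul : ∀ g h, act (g * h) = act g ∘ act h) :
    intAct act η (f.comp ⟨act s, hact s⟩) g = intAct act η f (s * g) := by
  unfold intAct
  rw [hmul s g, ← Measure.map_map (hact s).measurable (hact g).measurable,
    integral_map (hact s).measurable.aemeasurable f.continuous.aestronglyMeasurable]
  rfl

omit hact in
lemma leftTrans_unit (s g : Γ) :
    leftTrans s (stoneCechUnit g) = stoneCechUnit (s * g) :=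
  congrFun (stoneCechExtend_extends (continuous_of_discreteTopology
    (f := fun g => stoneCechUnit (s * g)))) g

omit hact in
lemma rightTrans_unit (s g : Γ) :
    rightTrans s (stoneCechUnit g) = stoneCechUnit (g * s) :=
  congrFun (stoneCechExtend_extends (continuous_of_discreteTopology
    (f := fun g => stoneCechUnit (g * s)))) g

lemma theta_comp_act (s : Γ) (f : C(K, ℝ))
    (hmul : ∀ g h, act (g * h) = act g ∘ act h) :
    theta act η (f.comp ⟨act s, hact s⟩) = fun ω => theta act η f (leftTrans s ω) := by
  refine stoneCech_ext (theta_continuous act η _)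
    ((theta_continuous act η f).comp (continuous_stoneCechExtend _)) fun g => ?_
  rw [theta_unit]
  show _ = theta act η f (leftTrans s (stoneCechUnit g))
  rw [leftTrans_unit, theta_unit]
  exact intAct_comp_act act η hact s g f hmul

omit hact in
lemma theta_rightInv (f : C(K, ℝ)) (g : Γ) (ω : StoneCech Γ)
    (hω : ω ∈ proximalSet act η) :
    theta act η f (rightTrans g ω) = theta act η f ω := by
  set L : Filter Γ := Filter.comap (stoneCechUnit : Γ → StoneCech Γ) (nhds ω) with hLdef
  haveI hne : L.NeBot := by
    refine Filter.comap_neBot fun t ht => ?_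
    obtain ⟨U, hUt, hUo, hωU⟩ := mem_nhds_iff.mp ht
    obtain ⟨p, hpU, hpr⟩ := denseRange_stoneCechUnit.inter_open_nonempty U hUo ⟨ω, hωU⟩
    obtain ⟨x, rfl⟩ := hpr
    exact ⟨x, hUt hpU⟩
  have hu : Tendsto (stoneCechUnit : Γ → StoneCech Γ) L (nhds ω) := tendsto_comap
  have h1 : Tendsto (fun g' => intAct act η f g') L (nhds (theta act η f ω)) := by
    have := ((theta_continuous act η f).tendsto ω).comp hu
    refine this.congr fun g' => ?_
    exact theta_unit act η f g'
  have h2 : Tendsto (fun g' => intAct act η f (g' * g)) L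
      (nhds (theta act η f (rightTrans g ω))) := by
    have hc : Tendsto (rightTrans g) (nhds ω) (nhds (rightTrans g ω)) :=
      (continuous_stoneCechExtend _).tendsto ω
    have := ((theta_continuous act η f).tendsto (rightTrans g ω)).comp (hc.comp hu)
    refine this.congr fun g' => ?_
    show theta act η f (rightTrans g (stoneCechUnit g')) = _
    rw [rightTrans_unit, theta_unit]
  have h3 := hω g f
  have h4 : Tendsto (fun g' => intAct act η f (g' * g) - intAct act η f g') L
      (nhds (theta act η f (rightTrans g ω) - theta act η f ω)) := h2.sub h1
  have h5 : theta act η f (rightTrans g ω) - theta act η f ω = 0 :=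
    tendsto_nhds_unique h4 h3
  linarith [h5]

/-- The restriction of `theta f` to the proximal set, as a continuous map. -/
noncomputable def ThetaC (f : C(K, ℝ)) : C(↥(proximalSet act η), ℝ) :=
  ⟨fun x => theta act η f x.1, (theta_continuous act η f).comp continuous_subtype_val⟩

omit hact in
lemma ThetaC_mem (f : C(K, ℝ)) : ThetaC act η f ∈ rightInvariantFuns act η :=
  fun g ω hω _ => theta_rightInv act η f g ω hω

end ThetaAux

/-- A nonnegative bounded continuous function, as a real-valued continuous map. -/
def toRealC {K : Type*} [TopologicalSpace K] (f : K →ᵇ ℝ≥0) : C(K, ℝ) :=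
  ⟨fun x => (f x : ℝ), NNReal.continuous_coe.comp f.continuous⟩


/-- Let the discrete group `Γ` act continuously on the compact Hausdorff space `K`, let `η` be
a regular Borel probability measure on `K` which is not `Γ`-invariant, and let `X = ∂_η Γ`.
If there is no `Γ`-invariant regular Borel probability measure on `K`, then there is no
left-`Γ`-invariant state on the algebra `C(X)^{Γ_r}` of right-`Γ`-invariant continuous
functions on `X`. -/
theorem no_left_invariant_state_on_rightInvariantFuns
    (Γ : Type*) [Group Γ] [TopologicalSpace Γ] [DiscreteTopology Γ]
    (K : Type*) [TopologicalSpace K] [CompactSpace K] [T2Space K]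
    [MeasurableSpace K] [BorelSpace K]
    (act : Γ → K → K) (hact : ∀ g, Continuous (act g))
    (hone : act 1 = id) (hmul : ∀ g h, act (g * h) = act g ∘ act h)
    (η : MeasureTheory.Measure K) [IsProbabilityMeasure η] (hreg : η.Regular)
    (hninv : ¬ ∀ g : Γ, Measure.map (act g) η = η)
    (hnoinv : ¬ ∃ ν : MeasureTheory.Measure K,
      IsProbabilityMeasure ν ∧ ν.Regular ∧ ∀ g : Γ, Measure.map (act g) ν = ν) :
    ¬ ∃ φ : C(↥(proximalSet act η), ℝ) →ₗ[ℝ] ℝ,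
        φ 1 = 1 ∧
        (∀ f ∈ rightInvariantFuns act η, 0 ≤ f → 0 ≤ φ f) ∧
        (∀ (g : Γ), ∀ f ∈ rightInvariantFuns act η, ∀ f' ∈ rightInvariantFuns act η,
          (∀ (ω : StoneCech Γ) (hω : ω ∈ proximalSet act η)
              (hω' : leftTrans g⁻¹ ω ∈ proximalSet act η),
            f' ⟨ω, hω⟩ = f ⟨leftTrans g⁻¹ ω, hω'⟩) →
          φ f' = φ f) := by
  rintro ⟨φ, hφ1, hφpos, hφinv⟩
  classical
  -- the induced functional on `C(K, ℝ)` is invariant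
  have hψinv : ∀ (s : Γ) (F : C(K, ℝ)),
      φ (ThetaC act η (F.comp ⟨act s, hact s⟩)) = φ (ThetaC act η F) := by
    intro s F
    refine hφinv s⁻¹ (ThetaC act η F) (ThetaC_mem act η F)
      (ThetaC act η (F.comp ⟨act s, hact s⟩)) (ThetaC_mem act η _) ?_
    intro ω hω hω'
    show theta act η (F.comp ⟨act s, hact s⟩) ω = theta act η F (leftTrans s⁻¹⁻¹ ω)
    rw [inv_inv, theta_comp_act act η hact s F hmul]
  have hψadd : ∀ F G : C(K, ℝ),
      φ (ThetaC act η (F + G)) = φ (ThetaC act η F) + φ (ThetaC act η G) := by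
    intro F G
    have h : ThetaC act η (F + G) = ThetaC act η F + ThetaC act η G := by
      apply ContinuousMap.ext; intro x
      have := congrFun (theta_add act η hact F G) x.1
      simpa [ThetaC] using this
    rw [h, map_add]
  have hψsmul : ∀ (r : ℝ) (F : C(K, ℝ)),
      φ (ThetaC act η (r • F)) = r * φ (ThetaC act η F) := by
    intro r F
    have h : ThetaC act η (r • F) = r • ThetaC act η F := by
      apply ContinuousMap.ext; intro x
      have := congrFun (theta_smul act η r F) x.1
      simpa [ThetaC] using this
    rw [h, LinearMap.map_smul, smul_eq_mul]
  have hψone : φ (ThetaC act η 1) = 1 := by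
    have h : ThetaC act η (1 : C(K, ℝ)) = 1 := by
      apply ContinuousMap.ext; intro x
      have := congrFun (theta_one act η hact) x.1
      simpa [ThetaC] using this
    rw [h, hφ1]
  have hψpos : ∀ F : C(K, ℝ), (∀ x, 0 ≤ F x) → 0 ≤ φ (ThetaC act η F) := by
    intro F hF
    refine hφpos _ (ThetaC_mem act η F) ?_
    refine ContinuousMap.le_def.mpr fun x => ?_
    simpa [ThetaC] using theta_nonneg act η F hF x.1
  -- the positive linear functional on nonnegative bounded continuous functions
  let Λ : (K →ᵇ ℝ≥0) →ₗ[ℝ≥0] ℝ≥0 :=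
    { toFun := fun f => ⟨φ (ThetaC act η (toRealC f)), hψpos _ (fun x => (f x).2)⟩
      map_add' := fun f g => by
        apply Subtype.ext
        show φ (ThetaC act η (toRealC (f + g))) = _
        have h : toRealC (f + g) = toRealC f + toRealC g := by
          apply ContinuousMap.ext; intro x; simp [toRealC]
        rw [h, hψadd]
        rfl
      map_smul' := fun c f => by
        apply Subtype.ext
        show φ (ThetaC act η (toRealC (c • f))) = _
        have h : toRealC (c • f) = (c : ℝ) • toRealC f := by
          apply ContinuousMap.ext; intro x
          simp [toRealC, NNReal.smul_def]
        rw [h, hψsmul]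
        simp [NNReal.smul_def]
        rfl
      }
  have hΛ1 : Λ 1 = 1 := by
    apply Subtype.ext
    show φ (ThetaC act η (toRealC 1)) = 1
    have h : toRealC (1 : K →ᵇ ℝ≥0) = 1 := by
      apply ContinuousMap.ext; intro x; simp [toRealC]
    rw [h, hψone]
  have hΛmono : ∀ f g : K →ᵇ ℝ≥0, (∀ x, f x ≤ g x) → Λ f ≤ Λ g := by
    intro f g hfg
    have hd : Λ f + Λ (BoundedContinuousFunction.mkOfCompact
        ⟨fun x => g x - f x, Continuous.sub g.continuous f.continuous⟩) = Λ g := by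
      rw [← map_add]
      congr 1
      ext x
      simp [add_tsub_cancel_of_le (hfg x)]
    calc Λ f ≤ Λ f + _ := le_self_add
    _ = Λ g := hd
  have hΛcomp : ∀ (s : Γ) (f : K →ᵇ ℝ≥0),
      Λ (f.compContinuous ⟨act s, hact s⟩) = Λ f := by
    intro s f
    apply Subtype.ext
    show φ (ThetaC act η (toRealC (f.compContinuous ⟨act s, hact s⟩))) = _
    have h : toRealC (f.compContinuous ⟨act s, hact s⟩)
        = (toRealC f).comp ⟨act s, hact s⟩ := rfl
    rw [h, hψinv s (toRealC f)]
    rfl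
  -- the content associated with `Λ`
  let Λc : CompactlySupportedContinuousMap K ℝ≥0 →ₗ[ℝ≥0] ℝ≥0 :=
    { toFun := fun f => Λ (BoundedContinuousFunction.mkOfCompact f.toContinuousMap)
      map_add' := fun f g => by rw [← map_add]; rfl
      map_smul' := fun c f => by rw [RingHom.id_apply, ← map_smul]; rfl }
  let μc : MeasureTheory.Content K :=
    { toFun := rieszContentAux Λc
      mono' := fun K₁ K₂ h => rieszContentAux_mono Λc h
      sup_le' := rieszContentAux_sup_le Λc
      sup_disjoint' := by
        intro K₁ K₂ hd _ _
        refine le_antisymm (rieszContentAux_sup_le Λc K₁ K₂) ?_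
        refine le_csInf (rieszContentAux_image_nonempty Λc _) ?_
        rintro b ⟨f, hf, rfl⟩
        obtain ⟨u, hu0, hu1, hu01⟩ := exists_continuous_zero_one_of_isClosed
          K₁.isCompact.isClosed K₂.isCompact.isClosed hd
        have hu1le : ∀ x, Real.toNNReal (u x) ≤ 1 := by
          intro x
          have h2 := (hu01 x).2
          simpa using Real.toNNReal_mono h2
        set a : C(K, ℝ≥0) := ⟨fun x => 1 - Real.toNNReal (u x),
          Continuous.sub continuous_const
            (continuous_real_toNNReal.comp u.continuous)⟩ with ha
        set b' : C(K, ℝ≥0) := ⟨fun x => Real.toNNReal (u x),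
          continuous_real_toNNReal.comp u.continuous⟩ with hb'
        have hab : ∀ x, a x + b' x = 1 := fun x => tsub_add_cancel_of_le (hu1le x)
        have hsplit : BoundedContinuousFunction.mkOfCompact (f.toContinuousMap * a)
            + BoundedContinuousFunction.mkOfCompact (f.toContinuousMap * b')
              = BoundedContinuousFunction.mkOfCompact f.toContinuousMap := by
          ext x : 1
          simp only [BoundedContinuousFunction.add_apply,
            BoundedContinuousFunction.mkOfCompact_apply, ContinuousMap.mul_apply]
          rw [← mul_add, hab x, mul_one]
        have h1 : rieszContentAux Λc K₁
            ≤ Λc (CompactlySupportedContinuousMap.continuousMapEquiv (f.toContinuousMap * a)) := by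
          apply rieszContentAux_le
          intro x hx
          have hfx : 1 ≤ f x := hf x (Set.mem_union_left _ hx)
          have hax : a x = 1 := by
            have hu : u x = 0 := hu0 hx
            simp [ha, hu]
          show (1 : ℝ≥0) ≤ f x * a x
          simp only [hax, mul_one]
          exact hfx
        have h2 : rieszContentAux Λc K₂
            ≤ Λc (CompactlySupportedContinuousMap.continuousMapEquiv (f.toContinuousMap * b')) := by
          apply rieszContentAux_le
          intro x hx
          have hfx : 1 ≤ f x := hf x (Set.mem_union_right _ hx)
          have hbx : b' x = 1 := by
            have hu : u x = 1 := hu1 hx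
            simp [hb', hu]
          show (1 : ℝ≥0) ≤ f x * b' x
          simp only [hbx, mul_one]
          exact hfx
        calc rieszContentAux Λc K₁ + rieszContentAux Λc K₂
            ≤ Λc (CompactlySupportedContinuousMap.continuousMapEquiv (f.toContinuousMap * a))
              + Λc (CompactlySupportedContinuousMap.continuousMapEquiv (f.toContinuousMap * b')) :=
              add_le_add h1 h2
        _ = Λ (BoundedContinuousFunction.mkOfCompact (f.toContinuousMap * a)
              + BoundedContinuousFunction.mkOfCompact (f.toContinuousMap * b')) :=
              (map_add Λ _ _).symm
        _ = Λc f := by rw [hsplit]; rfl }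
  -- total mass of the content is 1
  have hμtop : rieszContentAux Λc ⊤ = 1 := by
    apply le_antisymm
    · have hmem : Λ 1 ∈ Λc '' {f : CompactlySupportedContinuousMap K ℝ≥0 |
          ∀ x ∈ (⊤ : TopologicalSpace.Compacts K), (1 : ℝ≥0) ≤ f x} :=
        ⟨CompactlySupportedContinuousMap.continuousMapEquiv 1, fun x _ => le_rfl,
          congrArg Λ (by ext x; simp)⟩
      calc rieszContentAux Λc ⊤ ≤ Λ 1 := csInf_le (OrderBot.bddBelow _) hmem
      _ = 1 := hΛ1
    · refine le_csInf (rieszContentAux_image_nonempty Λc _) ?_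
      rintro b ⟨f, hf, rfl⟩
      have h1 : Λ 1 ≤ Λc f := hΛmono 1 _ fun x => by
        simpa using hf x (Set.mem_univ x)
      rw [← hΛ1]
      exact h1
  have hμuniv : μc.measure Set.univ = 1 := by
    rw [MeasureTheory.Content.measure_apply _ MeasurableSet.univ,
      μc.outerMeasure_of_isOpen Set.univ isOpen_univ]
    have h : μc.innerContent ⟨Set.univ, isOpen_univ⟩ = (rieszContentAux Λc ⊤ : ℝ≥0∞) := by
      apply le_antisymm
      · refine iSup_le fun Kc => iSup_le fun _ => ?_
        exact μc.mono Kc ⊤ (Set.subset_univ _)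
      · exact le_iSup₂_of_le ⊤ (Set.subset_univ _) le_rfl
    rw [h, hμtop]
    rfl
  -- the action by homeomorphisms
  have hinvcomp : ∀ (s : Γ) (x : K), act s⁻¹ (act s x) = x := by
    intro s x
    have h := congrFun (hmul s⁻¹ s) x
    rw [inv_mul_cancel, hone] at h
    exact h.symm
  have hinvcomp' : ∀ (s : Γ) (x : K), act s (act s⁻¹ x) = x := by
    intro s x
    have h := congrFun (hmul s s⁻¹) x
    rw [mul_inv_cancel, hone] at h
    exact h.symm
  let e : Γ → K ≃ₜ K := fun s =>
    { toFun := act s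
      invFun := act s⁻¹
      left_inv := hinvcomp s
      right_inv := hinvcomp' s
      continuous_toFun := hact s
      continuous_invFun := hact s⁻¹ }
  -- invariance of the content
  have hKinv : ∀ (s : Γ) ⦃Kc : TopologicalSpace.Compacts K⦄,
      μc (Kc.map (e s) (e s).continuous) = μc Kc := by
    intro s Kc
    suffices hkey : rieszContentAux Λc (Kc.map (e s) (e s).continuous) = rieszContentAux Λc Kc by
      exact congrArg ((↑·) : ℝ≥0 → ℝ≥0∞) hkey
    unfold rieszContentAux
    congr 1
    apply Set.Subset.antisymm
    · rintro _ ⟨f, hf, rfl⟩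
      refine ⟨CompactlySupportedContinuousMap.continuousMapEquiv
        (f.toContinuousMap.comp ⟨act s, hact s⟩), fun x hx => ?_,
        hΛcomp s (BoundedContinuousFunction.mkOfCompact f.toContinuousMap)⟩
      exact hf _ (Set.mem_image_of_mem _ hx)
    · rintro _ ⟨f, hf, rfl⟩
      refine ⟨CompactlySupportedContinuousMap.continuousMapEquiv
        (f.toContinuousMap.comp ⟨act s⁻¹, hact s⁻¹⟩), fun y hy => ?_,
        hΛcomp s⁻¹ (BoundedContinuousFunction.mkOfCompact f.toContinuousMap)⟩
      obtain ⟨x, hx, rfl⟩ := hy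
      show (1 : ℝ≥0) ≤ f (act s⁻¹ (act s x))
      rw [hinvcomp s x]
      exact hf x hx
  -- conclusion
  apply hnoinv
  refine ⟨μc.measure, ⟨hμuniv⟩, inferInstance, ?_⟩
  intro s
  refine MeasureTheory.Measure.ext fun A hA => ?_
  rw [MeasureTheory.Measure.map_apply (hact s).measurable hA,
    MeasureTheory.Content.measure_apply _ ((hact s).measurable hA),
    MeasureTheory.Content.measure_apply _ hA]
  exact μc.outerMeasure_preimage (e s) (hKinv s) A
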